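/- Let r_req, r_data, r_think, r_break, r_reset be nonnegative reals and let v : ℝ → ℝ⁶ be differentiable with v'(t) = f(v(t)) for all t ≥ 0, where f is the client/server drift vector field. If all six coordinates of v(0) are nonnegative, then all six coordinates of v(t) are nonnegative for every t ≥ 0; that is, the nonnegative orthant ℝ≥0⁶ is forward invariant for the fluid approximation. -/

import Mathlib

set_option maxHeartbeats 1000000 in
private lemma cs_key_core (rreq rdata rthink rbreak rreset : ℝ)
    (hreq : 0 ≤ rreq) (hdata : 0 ≤ rdata) (hthink : 0 ≤ rthink)
    (hbreak : 0 ≤ rbreak) (hreset : 0 ≤ rreset)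
    (n0 n1 n2 n3 n4 n5 m1 m2 x2 x3 x5 : ℝ)
    (h0le : n0 ≤ 0) (h1le : n1 ≤ 0) (h2le : n2 ≤ 0) (h3le : n3 ≤ 0)
    (h4le : n4 ≤ 0) (h5le : n5 ≤ 0)
    (hx2 : n2 ≤ x2) (hx3 : n3 ≤ x3) (hx5 : n5 ≤ x5)
    (hs2 : n2 * x2 = n2 ^ 2) (hs3 : n3 * x3 = n3 ^ 2) (hs5 : n5 * x5 = n5 ^ 2)
    (h0m1 : 0 ≤ n0 * m1) (h3m1 : 0 ≤ n3 * m1)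
    (h1m2 : 0 ≤ n1 * m2) (h4m2 : 0 ≤ n4 * m2)
    (hm1lb : n0 + n3 ≤ m1) (hm2lb : n1 + n4 ≤ m2) :
    2 * n0 * (-rreq * m1 + rthink * x2)
  + 2 * n1 * (rreq * m1 - rdata * m2)
  + 2 * n2 * (rdata * m2 - rthink * x2)
  + 2 * n3 * (-rreq * m1 - rbreak * x3 + rdata * m2 + rreset * x5)
  + 2 * n4 * (rreq * m1 - rdata * m2)
  + 2 * n5 * (rbreak * x3 - rreset * x5)
  ≤ (2 * (rreq + rdata + rthink + rbreak + rreset)) *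
      (n0 ^ 2 + n1 ^ 2 + n2 ^ 2 + n3 ^ 2 + n4 ^ 2 + n5 ^ 2) := by
  set S := n0 ^ 2 + n1 ^ 2 + n2 ^ 2 + n3 ^ 2 + n4 ^ 2 + n5 ^ 2 with hS
  have hSnn : 0 ≤ S := by positivity
  have hA : 2 * m1 * (n1 + n4 - n0 - n3) ≤ 2 * S := by
    have h1 : n1 * m1 ≤ n1 * (n0 + n3) := mul_le_mul_of_nonpos_left hm1lb h1le
    have h4 : n4 * m1 ≤ n4 * (n0 + n3) := mul_le_mul_of_nonpos_left hm1lb h4le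
    nlinarith [sq_nonneg (n1 - n0), sq_nonneg (n1 - n3), sq_nonneg (n4 - n0), sq_nonneg (n4 - n3)]
  have hB : 2 * m2 * (n2 + n3 - n1 - n4) ≤ 2 * S := by
    have h2 : n2 * m2 ≤ n2 * (n1 + n4) := mul_le_mul_of_nonpos_left hm2lb h2le
    have h3 : n3 * m2 ≤ n3 * (n1 + n4) := mul_le_mul_of_nonpos_left hm2lb h3le
    nlinarith [sq_nonneg (n2 - n1), sq_nonneg (n2 - n4), sq_nonneg (n3 - n1), sq_nonneg (n3 - n4)]
  have hC : 2 * x2 * (n0 - n2) ≤ 2 * S := by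
    have h : n0 * x2 ≤ n0 * n2 := mul_le_mul_of_nonpos_left hx2 h0le
    nlinarith [sq_nonneg (n0 - n2)]
  have hD : 2 * x3 * (n5 - n3) ≤ 2 * S := by
    have h : n5 * x3 ≤ n5 * n3 := mul_le_mul_of_nonpos_left hx3 h5le
    nlinarith [sq_nonneg (n5 - n3)]
  have hE : 2 * x5 * (n3 - n5) ≤ 2 * S := by
    have h : n3 * x5 ≤ n3 * n5 := mul_le_mul_of_nonpos_left hx5 h3le
    nlinarith [sq_nonneg (n3 - n5)]
  have hAr := mul_le_mul_of_nonneg_left hA hreq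
  have hBr := mul_le_mul_of_nonneg_left hB hdata
  have hCr := mul_le_mul_of_nonneg_left hC hthink
  have hDr := mul_le_mul_of_nonneg_left hD hbreak
  have hEr := mul_le_mul_of_nonneg_left hE hreset
  linarith [hAr, hBr, hCr, hDr, hEr]

set_option maxHeartbeats 1000000 in
private lemma cs_key_ineq (rreq rdata rthink rbreak rreset : ℝ)
    (hreq : 0 ≤ rreq) (hdata : 0 ≤ rdata) (hthink : 0 ≤ rthink)
    (hbreak : 0 ≤ rbreak) (hreset : 0 ≤ rreset) (x0 x1 x2 x3 x4 x5 : ℝ) :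
    2 * min x0 0 * (-rreq * min x0 x3 + rthink * x2)
  + 2 * min x1 0 * (rreq * min x0 x3 - rdata * min x1 x4)
  + 2 * min x2 0 * (rdata * min x1 x4 - rthink * x2)
  + 2 * min x3 0 * (-rreq * min x0 x3 - rbreak * x3 + rdata * min x1 x4 + rreset * x5)
  + 2 * min x4 0 * (rreq * min x0 x3 - rdata * min x1 x4)
  + 2 * min x5 0 * (rbreak * x3 - rreset * x5)
  ≤ (2 * (rreq + rdata + rthink + rbreak + rreset)) *
      (min x0 0 ^ 2 + min x1 0 ^ 2 + min x2 0 ^ 2 + min x3 0 ^ 2 + min x4 0 ^ 2 + min x5 0 ^ 2) := by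
  have hprod : ∀ a b : ℝ, 0 ≤ min a 0 * min a b := by
    intro a b
    rcases le_or_gt 0 a with h | h
    · simp [min_eq_right h]
    · have h1 : min a 0 ≤ 0 := min_le_right a 0
      have h2 : min a b ≤ 0 := le_trans (min_le_left a b) h.le
      nlinarith
  have hprod' : ∀ a b : ℝ, 0 ≤ min b 0 * min a b := by
    intro a b; rw [min_comm a b]; exact hprod b a
  have hmulself : ∀ a : ℝ, min a 0 * a = min a 0 ^ 2 := by
    intro a
    rcases le_or_gt 0 a with h | h
    · simp [min_eq_right h]
    · rw [min_eq_left h.le]; ring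
  have hmlb : ∀ a b : ℝ, min a 0 + min b 0 ≤ min a b := by
    intro a b
    rcases min_cases a b with ⟨h, _⟩ | ⟨h, _⟩ <;> rw [h]
    · have := min_le_left a (0:ℝ); have := min_le_right b (0:ℝ); linarith
    · have := min_le_left b (0:ℝ); have := min_le_right a (0:ℝ); linarith
  exact cs_key_core rreq rdata rthink rbreak rreset hreq hdata hthink hbreak hreset
    (min x0 0) (min x1 0) (min x2 0) (min x3 0) (min x4 0) (min x5 0)
    (min x0 x3) (min x1 x4) x2 x3 x5
    (min_le_right _ _) (min_le_right _ _) (min_le_right _ _) (min_le_right _ _)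
    (min_le_right _ _) (min_le_right _ _)
    (min_le_left _ _) (min_le_left _ _) (min_le_left _ _)
    (hmulself x2) (hmulself x3) (hmulself x5)
    (hprod x0 x3) (hprod' x0 x3) (hprod x1 x4) (hprod' x1 x4)
    (hmlb x0 x3) (hmlb x1 x4)

/-- The derivative of `x ↦ (min x 0)²` is `2 * min x 0`. -/
private lemma cs_phi_deriv (a : ℝ) :
    HasDerivAt (fun x : ℝ => min x 0 ^ 2) (2 * min a 0) a := by
  rcases lt_trichotomy a 0 with h | h | h
  · have hsq : HasDerivAt (fun x : ℝ => x ^ 2) (2 * a) a := by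
      simpa using (hasDerivAt_pow 2 a)
    have heq : (fun x : ℝ => min x 0 ^ 2) =ᶠ[nhds a] (fun x : ℝ => x ^ 2) := by
      filter_upwards [Iio_mem_nhds h] with x hx
      rw [min_eq_left (le_of_lt hx)]
    rw [min_eq_left h.le]
    exact hsq.congr_of_eventuallyEq heq
  · subst h
    rw [hasDerivAt_iff_tendsto_slope]
    have heq : slope (fun x : ℝ => min x 0 ^ 2) 0
        =ᶠ[nhdsWithin 0 {(0:ℝ)}ᶜ] fun x => min x 0 := by
      filter_upwards [self_mem_nhdsWithin] with x hx
      have hx0 : x ≠ 0 := hx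
      rcases lt_or_gt_of_ne hx0 with h | h
      · simp [slope, min_eq_left h.le, sq, hx0]
      · simp [slope, min_eq_right h.le]
    rw [Filter.tendsto_congr' heq]
    have hcont : Filter.Tendsto (fun x : ℝ => min x 0) (nhds 0) (nhds (min 0 0)) :=
      (continuous_id.min continuous_const).continuousAt
    simpa using hcont.mono_left nhdsWithin_le_nhds
  · have heq : (fun x : ℝ => min x 0 ^ 2) =ᶠ[nhds a] (fun _ : ℝ => (0:ℝ)) := by
      filter_upwards [Ioi_mem_nhds h] with x hx
      rw [min_eq_right (le_of_lt hx)]; ring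
    rw [min_eq_right h.le]
    simpa using (hasDerivAt_const a (0:ℝ)).congr_of_eventuallyEq heq



/-- The two-stage client/server drift vector field on `ℝ⁶`; coordinates
`x 0, …, x 5` are the counts of Client, Client_waiting, Client_think,
Server, Server_get, Server_broken. -/
noncomputable def csDrift (rreq rdata rthink rbreak rreset : ℝ)
    (x : EuclideanSpace ℝ (Fin 6)) : EuclideanSpace ℝ (Fin 6) :=
  WithLp.toLp 2 ![-rreq * min (x 0) (x 3) + rthink * x 2,
    rreq * min (x 0) (x 3) - rdata * min (x 1) (x 4),
    rdata * min (x 1) (x 4) - rthink * x 2,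
    -rreq * min (x 0) (x 3) - rbreak * x 3 + rdata * min (x 1) (x 4) + rreset * x 5,
    rreq * min (x 0) (x 3) - rdata * min (x 1) (x 4),
    rbreak * x 3 - rreset * x 5]

set_option maxHeartbeats 1000000 in
/-- The nonnegative orthant is forward invariant for the client/server fluid
approximation: if all coordinates start nonnegative they stay nonnegative. -/
theorem csDrift_nonneg_invariant (rreq rdata rthink rbreak rreset : ℝ)
    (hreq : 0 ≤ rreq) (hdata : 0 ≤ rdata) (hthink : 0 ≤ rthink)
    (hbreak : 0 ≤ rbreak) (hreset : 0 ≤ rreset)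
    (v : ℝ → EuclideanSpace ℝ (Fin 6))
    (hv : ∀ t : ℝ, 0 ≤ t →
      HasDerivAt v (csDrift rreq rdata rthink rbreak rreset (v t)) t)
    (h0 : ∀ i : Fin 6, 0 ≤ v 0 i) :
    ∀ t : ℝ, 0 ≤ t → ∀ i : Fin 6, 0 ≤ v t i := by
  set K : ℝ := 2 * (rreq + rdata + rthink + rbreak + rreset) with hK
  set g : ℝ → ℝ := fun s => ∑ j : Fin 6, min (v s j) 0 ^ 2 with hg
  set g' : ℝ → ℝ :=
    fun s => ∑ j : Fin 6, 2 * min (v s j) 0 * csDrift rreq rdata rthink rbreak rreset (v s) j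
    with hg'
  have hgderiv : ∀ s : ℝ, 0 ≤ s → HasDerivAt g (g' s) s := by
    intro s hs
    apply HasDerivAt.fun_sum
    intro j _
    have hc : HasDerivAt (fun u => v u j)
        (csDrift rreq rdata rthink rbreak rreset (v s) j) s := by
      have := (EuclideanSpace.proj j :
        EuclideanSpace ℝ (Fin 6) →L[ℝ] ℝ).hasFDerivAt.comp_hasDerivAt s (hv s hs)
      exact this
    exact (cs_phi_deriv (v s j)).comp s hc
  have hbound : ∀ s : ℝ, 0 ≤ s → g' s ≤ K * g s := by
    intro s hs
    have hki := cs_key_ineq rreq rdata rthink rbreak rreset hreq hdata hthink hbreak hreset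
      (v s 0) (v s 1) (v s 2) (v s 3) (v s 4) (v s 5)
    have e1 : g' s = 2 * min (v s 0) 0 * (-rreq * min (v s 0) (v s 3) + rthink * v s 2)
      + 2 * min (v s 1) 0 * (rreq * min (v s 0) (v s 3) - rdata * min (v s 1) (v s 4))
      + 2 * min (v s 2) 0 * (rdata * min (v s 1) (v s 4) - rthink * v s 2)
      + 2 * min (v s 3) 0 * (-rreq * min (v s 0) (v s 3) - rbreak * v s 3
          + rdata * min (v s 1) (v s 4) + rreset * v s 5)
      + 2 * min (v s 4) 0 * (rreq * min (v s 0) (v s 3) - rdata * min (v s 1) (v s 4))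
      + 2 * min (v s 5) 0 * (rbreak * v s 3 - rreset * v s 5) := by
      rw [hg']
      simp only [Fin.sum_univ_six]
      rfl
    have e2 : g s = min (v s 0) 0 ^ 2 + min (v s 1) 0 ^ 2 + min (v s 2) 0 ^ 2
        + min (v s 3) 0 ^ 2 + min (v s 4) 0 ^ 2 + min (v s 5) 0 ^ 2 := by
      rw [hg]; simp only [Fin.sum_univ_six]
    rw [e1, e2, hK]
    exact hki
  -- the auxiliary function h = g * exp (-K ·) is antitone on [0, ∞)
  set h : ℝ → ℝ := fun s => g s * Real.exp (-K * s) with hh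
  have hhderiv : ∀ s : ℝ, 0 ≤ s →
      HasDerivAt h (g' s * Real.exp (-K * s) + g s * (Real.exp (-K * s) * -K)) s := by
    intro s hs
    have he : HasDerivAt (fun u : ℝ => Real.exp (-K * u)) (Real.exp (-K * s) * -K) s := by
      have hlin : HasDerivAt (fun u : ℝ => -K * u) (-K) s := by
        simpa using (hasDerivAt_id s).const_mul (-K)
      exact hlin.exp
    exact (hgderiv s hs).mul he
  have hanti : AntitoneOn h (Set.Ici (0:ℝ)) := by
    apply antitoneOn_of_deriv_nonpos (convex_Ici 0)
    · intro s hs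
      exact ((hhderiv s hs).continuousAt).continuousWithinAt
    · intro s hs
      rw [interior_Ici] at hs
      exact ((hhderiv s (le_of_lt hs)).differentiableAt).differentiableWithinAt
    · intro s hs
      rw [interior_Ici] at hs
      rw [(hhderiv s (le_of_lt hs)).deriv]
      have hexp : 0 < Real.exp (-K * s) := Real.exp_pos _
      have hb := hbound s (le_of_lt hs)
      nlinarith
  intro t ht i
  have hg0 : g 0 = 0 := by
    rw [hg]
    apply Finset.sum_eq_zero
    intro j _
    rw [min_eq_right (h0 j)]
    ring
  have hht : h t ≤ h 0 := hanti (Set.self_mem_Ici) (Set.mem_Ici.2 ht) ht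
  have hh0 : h 0 = 0 := by rw [hh]; simp [hg0]
  have hgt0 : g t ≤ 0 := by
    have hht' : g t * Real.exp (-K * t) ≤ g 0 * Real.exp (-K * 0) := hht
    rw [hg0, zero_mul] at hht'
    have hexp : 0 < Real.exp (-K * t) := Real.exp_pos _
    nlinarith [hht', hexp]
  have hgnn : 0 ≤ g t := Finset.sum_nonneg fun j _ => sq_nonneg _
  have hgeq : g t = 0 := le_antisymm hgt0 hgnn
  have hterm : min (v t i) 0 ^ 2 = 0 := by
    have := (Finset.sum_eq_zero_iff_of_nonneg
      (fun j _ => sq_nonneg (min (v t j) 0))).1 hgeq i (Finset.mem_univ i)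
    exact this
  have : min (v t i) 0 = 0 := by
    exact pow_eq_zero_iff (n := 2) (by norm_num) |>.1 hterm
  exact min_eq_right_iff.1 this
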